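/- Define α₁(H) = (H/2)(β(2H,2H) + 1/(4H-1)) + (1/2)((1-2^{2H}) + (2H-1)/(4H-1) + H·2^{4H}/(4H-1)) + H ∫₀¹ (y^{2H}(1+y)^{2H-1} - y^{2H-1}(1+y)^{2H}) dy, and α₂(H) = α₁(H) + (H²(2H-1)²/2) ζ(4-4H). Then lim_{H→1/2⁻} α₁(H) = 1/2 and lim_{H→1/2⁺} α₂(H) = 1/2. -/

import Mathlib

open MeasureTheory Filter

/-- The constant `α₁(H)` (with `β(a,b) = Γ(a)Γ(b)/Γ(a+b)`). -/
noncomputable def alpha1 (H : ℝ) : ℝ :=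
  H / 2 * (Real.Gamma (2*H) * Real.Gamma (2*H) / Real.Gamma (4*H) + 1 / (4*H - 1))
  + (1/2) * ((1 - (2:ℝ) ^ (2*H)) + (2*H - 1) / (4*H - 1)
      + H * (2:ℝ) ^ (4*H) / (4*H - 1))
  + H * ∫ y in (0:ℝ)..1,
      (y ^ (2*H) * (1 + y) ^ (2*H - 1) - y ^ (2*H - 1) * (1 + y) ^ (2*H))

/-- The constant `α₂(H)`, with `ζ(4-4H) = ∑_{k ≥ 1} k^{4H-4}`. -/
noncomputable def alpha2 (H : ℝ) : ℝ :=
  alpha1 H + (H ^ 2 * (2*H - 1) ^ 2 / 2) * ∑' k : ℕ, ((k : ℝ) + 1) ^ (4*H - 4)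

lemma g_tendsto :
    Tendsto (fun H : ℝ => ∫ y in (0:ℝ)..1,
      (y ^ (2*H) * (1 + y) ^ (2*H - 1) - y ^ (2*H - 1) * (1 + y) ^ (2*H)))
      (nhds (1/2 : ℝ)) (nhds (-1)) := by
  have key := intervalIntegral.tendsto_integral_filter_of_dominated_convergence
    (μ := volume) (a := (0:ℝ)) (b := 1)
    (F := fun H : ℝ => fun y : ℝ =>
      y ^ (2*H) * (1 + y) ^ (2*H - 1) - y ^ (2*H - 1) * (1 + y) ^ (2*H))
    (f := fun _ : ℝ => (-1 : ℝ)) (l := nhds (1/2 : ℝ))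
    (bound := fun y => 2 + 4 * y ^ (-(1/2) : ℝ)) ?_ ?_ ?_ ?_
  · simpa using key
  · refine Eventually.of_forall fun H => ?_
    refine ContinuousOn.aestronglyMeasurable ?_ measurableSet_uIoc
    rw [Set.uIoc_of_le (by norm_num : (0:ℝ) ≤ 1)]
    intro x hx
    have hx0 : (0:ℝ) < x := hx.1
    have h1x : (0:ℝ) < 1 + x := by linarith
    have c1 : ∀ c : ℝ, ContinuousWithinAt (fun y : ℝ => y ^ c) (Set.Ioc 0 1) x :=
      fun c => (Real.continuousAt_rpow_const x c (Or.inl hx0.ne')).continuousWithinAt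
    have c2 : ∀ c : ℝ, ContinuousWithinAt (fun y : ℝ => (1 + y) ^ c) (Set.Ioc 0 1) x := by
      intro c
      exact ((Real.continuousAt_rpow_const (1+x) c (Or.inl h1x.ne')).comp
        ((continuous_const.add continuous_id).continuousAt)).continuousWithinAt
    exact ((c1 _).mul (c2 _)).sub ((c1 _).mul (c2 _))
  · have hmem : Set.Ioo (1/4 : ℝ) (3/4) ∈ nhds (1/2 : ℝ) :=
      Ioo_mem_nhds (by norm_num) (by norm_num)
    filter_upwards [hmem] with H hH
    refine Eventually.of_forall fun x hx => ?_
    rw [Set.uIoc_of_le (by norm_num : (0:ℝ) ≤ 1)] at hx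
    obtain ⟨hx0, hx1⟩ := hx
    obtain ⟨hH1, hH2⟩ := hH
    have h1x : (1:ℝ) ≤ 1 + x := by linarith
    have ha : x ^ (2*H) * (1 + x) ^ (2*H - 1) ≤ 2 := by
      have p1 : x ^ (2*H) ≤ 1 := Real.rpow_le_one hx0.le hx1 (by linarith)
      have p2 : (1 + x) ^ (2*H - 1) ≤ 2 := by
        calc (1 + x) ^ (2*H - 1) ≤ (1 + x) ^ (1:ℝ) :=
              Real.rpow_le_rpow_of_exponent_le h1x (by linarith)
          _ = 1 + x := Real.rpow_one _
          _ ≤ 2 := by linarith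
      calc x ^ (2*H) * (1 + x) ^ (2*H - 1) ≤ 1 * 2 :=
            mul_le_mul p1 p2 (Real.rpow_nonneg (by linarith) _) one_pos.le
        _ = 2 := by ring
    have hb : x ^ (2*H - 1) * (1 + x) ^ (2*H) ≤ x ^ (-(1/2):ℝ) * 4 := by
      have p1 : x ^ (2*H - 1) ≤ x ^ (-(1/2):ℝ) :=
        Real.rpow_le_rpow_of_exponent_ge hx0 hx1 (by linarith)
      have p2 : (1 + x) ^ (2*H) ≤ 4 := by
        calc (1 + x) ^ (2*H) ≤ (2:ℝ) ^ (2*H) :=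
              Real.rpow_le_rpow (by linarith) (by linarith) (by linarith)
          _ ≤ (2:ℝ) ^ (2:ℝ) :=
              Real.rpow_le_rpow_of_exponent_le one_le_two (by linarith)
          _ = 4 := by
              rw [show (2:ℝ) = ((2:ℕ):ℝ) by norm_num, Real.rpow_natCast]; norm_num
      exact mul_le_mul p1 p2 (Real.rpow_nonneg (by linarith) _)
        (Real.rpow_nonneg hx0.le _)
    have hna : 0 ≤ x ^ (2*H) * (1 + x) ^ (2*H - 1) :=
      mul_nonneg (Real.rpow_nonneg hx0.le _) (Real.rpow_nonneg (by linarith) _)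
    have hnb : 0 ≤ x ^ (2*H - 1) * (1 + x) ^ (2*H) :=
      mul_nonneg (Real.rpow_nonneg hx0.le _) (Real.rpow_nonneg (by linarith) _)
    rw [Real.norm_eq_abs]
    calc |x ^ (2*H) * (1 + x) ^ (2*H - 1) - x ^ (2*H - 1) * (1 + x) ^ (2*H)|
        ≤ |x ^ (2*H) * (1 + x) ^ (2*H - 1)| + |x ^ (2*H - 1) * (1 + x) ^ (2*H)| :=
          abs_sub _ _
      _ = x ^ (2*H) * (1 + x) ^ (2*H - 1) + x ^ (2*H - 1) * (1 + x) ^ (2*H) := by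
          rw [abs_of_nonneg hna, abs_of_nonneg hnb]
      _ ≤ 2 + x ^ (-(1/2):ℝ) * 4 := add_le_add ha hb
      _ = 2 + 4 * x ^ (-(1/2):ℝ) := by ring
  · exact intervalIntegrable_const.add
      ((intervalIntegral.intervalIntegrable_rpow' (by norm_num)).const_mul 4)
  · refine Eventually.of_forall fun x hx => ?_
    rw [Set.uIoc_of_le (by norm_num : (0:ℝ) ≤ 1)] at hx
    have hx0 : (0:ℝ) < x := hx.1
    have h1x : (0:ℝ) < 1 + x := by linarith
    have hc : ∀ c : ℝ, ∀ b : ℝ, 0 < b →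
        ContinuousAt (fun H : ℝ => b ^ (2*H + c)) (1/2) := by
      intro c b hb
      exact (Real.continuousAt_const_rpow hb.ne').comp
        ((continuous_const.mul continuous_id).add continuous_const).continuousAt
    have key : ContinuousAt (fun H : ℝ =>
        x ^ (2*H) * (1 + x) ^ (2*H - 1) - x ^ (2*H - 1) * (1 + x) ^ (2*H)) (1/2) := by
      have e1 := hc 0 x hx0
      have e2 := hc (-1) (1+x) h1x
      have e3 := hc (-1) x hx0
      have e4 := hc 0 (1+x) h1x
      simp only [add_zero] at e1 e4
      have e2' : ContinuousAt (fun H : ℝ => (1+x) ^ (2*H - 1)) (1/2) := by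
        simpa [sub_eq_add_neg] using e2
      have e3' : ContinuousAt (fun H : ℝ => x ^ (2*H - 1)) (1/2) := by
        simpa [sub_eq_add_neg] using e3
      exact (e1.mul e2').sub (e3'.mul e4)
    have := key.tendsto
    convert this using 2
    have h2 : 2 * (1/2 : ℝ) = 1 := by norm_num
    rw [h2]
    simp [Real.rpow_one, Real.rpow_zero]

lemma alpha1_tendsto : Tendsto alpha1 (nhds (1/2 : ℝ)) (nhds (1/2)) := by
  have hGamma : ∀ s : ℝ, 0 < s → ContinuousAt Real.Gamma s := by
    intro s hs
    refine (Real.differentiableAt_Gamma fun m => ?_).continuousAt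
    have : (0:ℝ) ≤ m := Nat.cast_nonneg m
    intro h; rw [h] at hs; linarith
  have h2H : Tendsto (fun H : ℝ => 2*H) (nhds (1/2:ℝ)) (nhds 1) := by
    have : Tendsto (fun H : ℝ => 2*H) (nhds (1/2:ℝ)) (nhds (2*(1/2))) :=
      (continuous_const.mul continuous_id).tendsto _
    simpa using this
  have h4H : Tendsto (fun H : ℝ => 4*H) (nhds (1/2:ℝ)) (nhds 2) := by
    have : Tendsto (fun H : ℝ => 4*H) (nhds (1/2:ℝ)) (nhds (4*(1/2))) :=
      (continuous_const.mul continuous_id).tendsto _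
    norm_num at this
    exact this
  have h4H1 : Tendsto (fun H : ℝ => 4*H - 1) (nhds (1/2:ℝ)) (nhds 1) := by
    have := h4H.sub (tendsto_const_nhds (x := (1:ℝ)))
    norm_num at this
    exact this
  have h2H1 : Tendsto (fun H : ℝ => 2*H - 1) (nhds (1/2:ℝ)) (nhds 0) := by
    have := h2H.sub (tendsto_const_nhds (x := (1:ℝ)))
    simpa using this
  have hg1 : Tendsto (fun H : ℝ => Real.Gamma (2*H)) (nhds (1/2:ℝ)) (nhds 1) := by
    have := ((hGamma 1 one_pos).tendsto).comp h2H
    simpa [Real.Gamma_one, Function.comp_def] using this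
  have hg2 : Tendsto (fun H : ℝ => Real.Gamma (4*H)) (nhds (1/2:ℝ)) (nhds 1) := by
    have := ((hGamma 2 two_pos).tendsto).comp h4H
    simpa [Real.Gamma_two, Function.comp_def] using this
  have hp2 : Tendsto (fun H : ℝ => (2:ℝ) ^ (2*H)) (nhds (1/2:ℝ)) (nhds 2) := by
    have := (Real.continuousAt_const_rpow (a := (2:ℝ)) (b := 1) two_ne_zero).tendsto.comp h2H
    simpa [Real.rpow_one, Function.comp_def] using this
  have hp4 : Tendsto (fun H : ℝ => (2:ℝ) ^ (4*H)) (nhds (1/2:ℝ)) (nhds 4) := by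
    have := (Real.continuousAt_const_rpow (a := (2:ℝ)) (b := 2) two_ne_zero).tendsto.comp h4H
    have h22 : (2:ℝ) ^ (2:ℝ) = 4 := by
      rw [show (2:ℝ) = ((2:ℕ):ℝ) by norm_num, Real.rpow_natCast]; norm_num
    simpa [h22, Function.comp_def] using this
  have hid : Tendsto (fun H : ℝ => H) (nhds (1/2:ℝ)) (nhds (1/2)) := tendsto_id
  have t1 : Tendsto (fun H : ℝ => H / 2 *
      (Real.Gamma (2*H) * Real.Gamma (2*H) / Real.Gamma (4*H) + 1 / (4*H - 1)))
      (nhds (1/2:ℝ)) (nhds (1/2)) := by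
    have := (hid.div_const 2).mul
      (((hg1.mul hg1).div hg2 one_ne_zero).add
        ((tendsto_const_nhds (x := (1:ℝ))).div h4H1 one_ne_zero))
    convert this using 2
    all_goals norm_num
  have t2 : Tendsto (fun H : ℝ => (1/2) * ((1 - (2:ℝ) ^ (2*H)) + (2*H - 1) / (4*H - 1)
      + H * (2:ℝ) ^ (4*H) / (4*H - 1))) (nhds (1/2:ℝ)) (nhds (1/2)) := by
    have := (tendsto_const_nhds (x := (1/2:ℝ))).mul
      ((((tendsto_const_nhds (x := (1:ℝ))).sub hp2).add (h2H1.div h4H1 one_ne_zero)).add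
        (((hid.mul hp4).div h4H1 one_ne_zero)))
    convert this using 2
    all_goals norm_num
  have t3 : Tendsto (fun H : ℝ => H * ∫ y in (0:ℝ)..1,
      (y ^ (2*H) * (1 + y) ^ (2*H - 1) - y ^ (2*H - 1) * (1 + y) ^ (2*H)))
      (nhds (1/2:ℝ)) (nhds (-(1/2))) := by
    have := hid.mul g_tendsto
    convert this using 2
    all_goals norm_num
  have := (t1.add t2).add t3
  have h : (1/2 : ℝ) + 1/2 + -(1/2) = 1/2 := by norm_num
  rw [h] at this
  exact this

lemma rem_tendsto :
    Tendsto (fun H : ℝ => (H ^ 2 * (2*H - 1) ^ 2 / 2) * ∑' k : ℕ, ((k : ℝ) + 1) ^ (4*H - 4))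
      (nhdsWithin (1/2 : ℝ) (Set.Ioi (1/2))) (nhds 0) := by
  have hsum : ∀ p : ℝ, p < -1 → Summable (fun k : ℕ => ((k:ℝ)+1) ^ p) := by
    intro p hp
    have h1 : Summable (fun n : ℕ => (n:ℝ) ^ p) := Real.summable_nat_rpow.mpr hp
    have h2 := (summable_nat_add_iff 1).mpr h1
    refine h2.congr fun k => ?_
    push_cast
    ring_nf
  set C : ℝ := ∑' k : ℕ, ((k:ℝ)+1) ^ (-(3/2):ℝ) with hC
  have hCsum : Summable (fun k : ℕ => ((k:ℝ)+1) ^ (-(3/2):ℝ)) := hsum _ (by norm_num)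
  have hmem : Set.Ioo (1/2 : ℝ) (9/16) ∈ nhdsWithin (1/2:ℝ) (Set.Ioi (1/2)) :=
    Ioo_mem_nhdsGT_of_mem ⟨le_refl _, by norm_num⟩
  have hupper : Tendsto (fun H : ℝ => (H ^ 2 * (2*H - 1) ^ 2 / 2) * C)
      (nhdsWithin (1/2 : ℝ) (Set.Ioi (1/2))) (nhds 0) := by
    have hcont : Continuous (fun H : ℝ => (H ^ 2 * (2*H - 1) ^ 2 / 2) * C) := by
      continuity
    have := (hcont.tendsto (1/2)).mono_left
      (nhdsWithin_le_nhds (s := Set.Ioi (1/2:ℝ)))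
    have hv : ((1/2:ℝ) ^ 2 * (2*(1/2) - 1) ^ 2 / 2) * C = 0 := by norm_num
    rwa [hv] at this
  refine tendsto_of_tendsto_of_tendsto_of_le_of_le' tendsto_const_nhds hupper ?_ ?_
  · filter_upwards [hmem] with H hH
    refine mul_nonneg (by positivity) (tsum_nonneg fun k => ?_)
    exact Real.rpow_nonneg (by positivity) _
  · filter_upwards [hmem] with H hH
    obtain ⟨hH1, hH2⟩ := hH
    have hexp : 4*H - 4 < -1 := by linarith
    have hle : ∑' k : ℕ, ((k:ℝ)+1) ^ (4*H - 4) ≤ C := by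
      refine Summable.tsum_le_tsum (fun k => ?_) (hsum _ hexp) hCsum
      refine Real.rpow_le_rpow_of_exponent_le ?_ (by linarith)
      have : (0:ℝ) ≤ k := Nat.cast_nonneg k
      linarith
    exact mul_le_mul_of_nonneg_left hle (by positivity)

theorem stmt12 :
    Filter.Tendsto alpha1 (nhdsWithin (1/2 : ℝ) (Set.Iio (1/2))) (nhds (1/2))
    ∧ Filter.Tendsto alpha2 (nhdsWithin (1/2 : ℝ) (Set.Ioi (1/2))) (nhds (1/2)) := by
  constructor
  · exact alpha1_tendsto.mono_left nhdsWithin_le_nhds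
  · have h1 := alpha1_tendsto.mono_left
      (nhdsWithin_le_nhds (s := Set.Ioi (1/2:ℝ)))
    have := h1.add rem_tendsto
    rw [add_zero] at this
    exact this
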